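/- Let a, b, c, d ≥ 1 be integers and let M be the 4×4 integer matrix with diagonal entries a, b, c, d and all off-diagonal entries equal to −1. If det M = 0 and two of the diagonal entries equal 5, then the remaining two diagonal entries are either 1 and 5 (in some order) or both equal to 2. -/

import Mathlib

lemma detM_eq (a b c d : ℤ) :
    (!![a, -1, -1, -1;
        -1, b, -1, -1;
        -1, -1, c, -1;
        -1, -1, -1, d]).det
      = a*b*c*d - a*b - a*c - a*d - b*c - b*d - c*d - 2*a - 2*b - 2*c - 2*d - 3 := by
  rw [Matrix.det_succ_row_zero]
  simp [Fin.sum_univ_succ, Matrix.det_fin_three, Matrix.submatrix_apply, Fin.succAbove,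
    show (Fin.castSucc 2 : Fin 4) = 2 from rfl]
  ring

lemma key (x y : ℤ) (hx : 1 ≤ x) (hy : 1 ≤ y) (h : 2*x*y - x - y - 4 = 0) :
    (x = 1 ∧ y = 5) ∨ (x = 5 ∧ y = 1) ∨ (x = 2 ∧ y = 2) := by
  have h9 : (2*x - 1) * (2*y - 1) = 9 := by nlinarith
  have hx5 : x ≤ 5 := by nlinarith
  have hy5 : y ≤ 5 := by nlinarith
  interval_cases x <;> omega

theorem stmt_12 (a b c d : ℤ) (ha : 1 ≤ a) (hb : 1 ≤ b) (hc : 1 ≤ c) (hd : 1 ≤ d)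
    (hdet : (!![a, -1, -1, -1;
                -1, b, -1, -1;
                -1, -1, c, -1;
                -1, -1, -1, d]).det = 0)
    (i j : Fin 4) (hij : i ≠ j)
    (hi5 : ![a, b, c, d] i = 5) (hj5 : ![a, b, c, d] j = 5) :
    ∀ k l : Fin 4, k ≠ l → k ≠ i → k ≠ j → l ≠ i → l ≠ j →
      (![a, b, c, d] k = 1 ∧ ![a, b, c, d] l = 5) ∨
      (![a, b, c, d] k = 5 ∧ ![a, b, c, d] l = 1) ∨
      (![a, b, c, d] k = 2 ∧ ![a, b, c, d] l = 2) := by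
  rw [detM_eq] at hdet
  intro k l hkl hki hkj hli hlj
  fin_cases i <;> fin_cases j <;>
    first
    | exact absurd rfl hij
    | (simp only [Matrix.cons_val_zero, Matrix.cons_val_one, Matrix.head_cons,
        Matrix.cons_val_two, Matrix.tail_cons, Matrix.cons_val_three] at hi5 hj5
       subst hi5; subst hj5
       fin_cases k <;> fin_cases l <;>
         first
         | exact absurd rfl hkl
         | exact absurd rfl hki
         | exact absurd rfl hkj
         | exact absurd rfl hli
         | exact absurd rfl hlj
         | (simp only [Fin.isValue, Matrix.cons_val', Matrix.cons_val_zero, Matrix.cons_val_one,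
              Matrix.head_cons, Matrix.cons_val_fin_one, Matrix.empty_val',
              Matrix.cons_val_two, Matrix.tail_cons, Matrix.cons_val_three, Fin.mk_zero,
              Fin.mk_one, Matrix.cons_val_succ, Matrix.cons_val_zero', Matrix.cons_val_succ']
            exact key _ _ (by assumption) (by assumption) (by nlinarith)))
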